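/- For 0 < p < q define, for ε > 0, Δ_{p,q}(ε) = sup{ ‖x‖_{f^q} : x = (x_i) ∈ c₀₀, |x_i| ≤ ε for all i, and ‖x‖_{f^p} ≤ 1 }. Then lim_{ε→0⁺} Δ_{p,q}(ε) = 0. -/

import Mathlib

/-- `f(x) = log₂(x+1)`; note `flog 0 = 0`. -/
noncomputable def flog (x : ℝ) : ℝ := Real.logb 2 (x + 1)

/-- The `n`-th largest value (1-indexed) of the sequence `(|x i|)`, i.e. the decreasing
rearrangement of `(|x i|)`. -/
noncomputable def drear (x : ℕ →₀ ℝ) (n : ℕ) : ℝ :=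
  sSup {t : ℝ | 0 ≤ t ∧ n ≤ (x.support.filter fun i => t ≤ |x i|).card}

/-- The norm `‖x‖_g = sup_{n₁ < … < n_l} (1/g(l)) ∑ |x_{n_i}|`. -/
noncomputable def gnorm (g : ℕ → ℝ) (x : ℕ →₀ ℝ) : ℝ :=
  sSup {r : ℝ | ∃ s : Finset ℕ, s.Nonempty ∧ r = (1 / g s.card) * ∑ i ∈ s, |x i|}

/-- The norm `|||x|||_g = ∑_{i ≥ 1} x_i^# / g(i)`. -/
noncomputable def tnorm (g : ℕ → ℝ) (x : ℕ →₀ ℝ) : ℝ :=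
  ∑ i ∈ Finset.range x.support.card, drear x (i + 1) / g (i + 1)

lemma flog_nat_ge_one {l : ℕ} (hl : 1 ≤ l) : 1 ≤ flog l := by
  have h2 : (2:ℝ) ≤ (l:ℝ) + 1 := by
    have : (1:ℝ) ≤ (l:ℝ) := by exact_mod_cast hl
    linarith
  unfold flog
  calc (1:ℝ) = Real.logb 2 2 := (Real.logb_self_eq_one (by norm_num)).symm
  _ ≤ Real.logb 2 ((l:ℝ)+1) :=
      Real.logb_le_logb_of_le (by norm_num) (by norm_num) h2

lemma flog_rpow_ge_one {l : ℕ} (hl : 1 ≤ l) {t : ℝ} (ht : 0 ≤ t) :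
    1 ≤ flog l ^ t :=
  Real.one_le_rpow (flog_nat_ge_one hl) ht

lemma sum_abs_le_total (x : ℕ →₀ ℝ) (s : Finset ℕ) :
    ∑ i ∈ s, |x i| ≤ ∑ i ∈ x.support, |x i| := by
  have h1 : ∑ i ∈ s, |x i| = ∑ i ∈ s ∩ x.support, |x i| := by
    refine (Finset.sum_subset Finset.inter_subset_left ?_).symm
    intro i hi hni
    have : x i = 0 := by
      by_contra h
      exact hni (Finset.mem_inter.mpr ⟨hi, Finsupp.mem_support_iff.mpr h⟩)
    simp [this]
  rw [h1]
  exact Finset.sum_le_sum_of_subset_of_nonneg Finset.inter_subset_right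
    (fun i _ _ => abs_nonneg _)

lemma gnorm_bddAbove (t : ℝ) (ht : 0 ≤ t) (x : ℕ →₀ ℝ) :
    BddAbove {r : ℝ | ∃ s : Finset ℕ, s.Nonempty ∧
      r = (1 / ((fun l : ℕ => flog l ^ t) s.card)) * ∑ i ∈ s, |x i|} := by
  refine ⟨∑ i ∈ x.support, |x i|, ?_⟩
  rintro r ⟨s, hs, rfl⟩
  have hl : 1 ≤ s.card := Finset.card_pos.mpr hs
  have h1 : 1 ≤ flog s.card ^ t := flog_rpow_ge_one hl ht
  have hpos : (0:ℝ) < flog s.card ^ t := lt_of_lt_of_le one_pos h1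
  have hsum : (0:ℝ) ≤ ∑ i ∈ s, |x i| := Finset.sum_nonneg fun i _ => abs_nonneg _
  calc (1 / flog s.card ^ t) * ∑ i ∈ s, |x i| ≤ 1 * ∑ i ∈ s, |x i| := by
        apply mul_le_mul_of_nonneg_right _ hsum
        rw [div_le_one hpos]; exact h1
  _ = ∑ i ∈ s, |x i| := one_mul _
  _ ≤ ∑ i ∈ x.support, |x i| := sum_abs_le_total x s

lemma gnorm_set_nonempty (g : ℕ → ℝ) (x : ℕ →₀ ℝ) :
    {r : ℝ | ∃ s : Finset ℕ, s.Nonempty ∧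
      r = (1 / g s.card) * ∑ i ∈ s, |x i|}.Nonempty :=
  ⟨(1 / g ({0} : Finset ℕ).card) * ∑ i ∈ ({0} : Finset ℕ), |x i|,
    ⟨{0}, Finset.singleton_nonempty 0, rfl⟩⟩

lemma gnorm_zero (g : ℕ → ℝ) : gnorm g 0 = 0 := by
  unfold gnorm
  have : {r : ℝ | ∃ s : Finset ℕ, s.Nonempty ∧
      r = (1 / g s.card) * ∑ i ∈ s, |(0 : ℕ →₀ ℝ) i|} = {0} := by
    ext r
    simp only [Set.mem_setOf_eq, Set.mem_singleton_iff]
    constructor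
    · rintro ⟨s, hs, rfl⟩; simp
    · rintro rfl
      exact ⟨{0}, Finset.singleton_nonempty 0, by simp⟩
  rw [this, csSup_singleton]

theorem tendsto_Delta_zero (p q : ℝ) (hp : 0 < p) (hpq : p < q) :
    Filter.Tendsto
      (fun ε : ℝ => sSup {r : ℝ | ∃ x : ℕ →₀ ℝ, (∀ i, |x i| ≤ ε) ∧
        gnorm (fun l => flog l ^ p) x ≤ 1 ∧ r = gnorm (fun l => flog l ^ q) x})
      (nhdsWithin 0 (Set.Ioi 0)) (nhds 0) := by
  have hq : 0 < q := hp.trans hpq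
  rw [Metric.tendsto_nhdsWithin_nhds]
  intro δ hδ
  -- choose L
  set M : ℝ := max 1 ((2/δ) ^ (1/(q-p))) with hM
  set L : ℕ := ⌈(2:ℝ)^M⌉₊ with hL
  -- Claim A : for l > L, flog l ^ (p - q) ≤ δ/2
  have claimA : ∀ l : ℕ, L < l → flog l ^ (p - q) ≤ δ / 2 := by
    intro l hl
    have hflog : M ≤ flog l := by
      have h1 : (2:ℝ)^M ≤ (l:ℝ) + 1 := by
        calc (2:ℝ)^M ≤ (L:ℝ) := Nat.le_ceil _
        _ ≤ (l:ℝ) := by exact_mod_cast hl.le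
        _ ≤ (l:ℝ) + 1 := by linarith
      have h2pos : (0:ℝ) < (2:ℝ)^M := Real.rpow_pos_of_pos (by norm_num) _
      calc M = Real.logb 2 ((2:ℝ)^M) := (Real.logb_rpow (by norm_num) (by norm_num)).symm
      _ ≤ Real.logb 2 ((l:ℝ)+1) := Real.logb_le_logb_of_le (by norm_num) h2pos h1
    have hroot : (2/δ) ^ (1/(q-p)) ≤ flog l := le_trans (le_max_right _ _) hflog
    have hqp : (0:ℝ) < q - p := by linarith
    have hrootnn : (0:ℝ) ≤ (2/δ) ^ (1/(q-p)) :=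
      Real.rpow_nonneg (by positivity) _
    have hkey : 2/δ ≤ flog l ^ (q - p) := by
      calc 2/δ = ((2/δ) ^ (1/(q-p))) ^ (q-p) := by
            rw [← Real.rpow_mul (by positivity), one_div,
              inv_mul_cancel₀ (ne_of_gt hqp), Real.rpow_one]
      _ ≤ flog l ^ (q-p) := Real.rpow_le_rpow hrootnn hroot hqp.le
    have hflogpos : (0:ℝ) < flog l := by
      have h1M : (1:ℝ) ≤ M := le_max_left _ _
      linarith
    have : flog l ^ (p - q) = (flog l ^ (q - p))⁻¹ := by
      rw [← Real.rpow_neg hflogpos.le]; ring_nf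
    rw [this]
    rw [inv_le_comm₀ (lt_of_lt_of_le (by positivity) hkey) (by positivity)]
    calc (δ/2)⁻¹ = 2/δ := by field_simp
    _ ≤ flog l ^ (q - p) := hkey
  -- choose ε₀
  refine ⟨δ / (2 * (L + 1)), by positivity, ?_⟩
  intro ε hε hdist
  have hεpos : (0:ℝ) < ε := hε
  have hεlt : ε < δ / (2 * (L + 1)) := by
    rwa [Real.dist_eq, sub_zero, abs_of_pos hεpos] at hdist
  set S : Set ℝ := {r : ℝ | ∃ x : ℕ →₀ ℝ, (∀ i, |x i| ≤ ε) ∧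
        gnorm (fun l => flog l ^ p) x ≤ 1 ∧ r = gnorm (fun l => flog l ^ q) x} with hS
  -- 0 ∈ S
  have h0S : (0:ℝ) ∈ S := by
    refine ⟨0, fun i => by simp [hεpos.le], ?_, (gnorm_zero _).symm⟩
    rw [gnorm_zero]; norm_num
  -- every element of S is ≤ δ/2
  have hub : ∀ r ∈ S, r ≤ δ / 2 := by
    rintro r ⟨x, hxε, hxp, rfl⟩
    unfold gnorm
    refine csSup_le (gnorm_set_nonempty (fun l : ℕ => flog l ^ q) x) ?_
    rintro t ⟨s, hs, rfl⟩
    have hl : 1 ≤ s.card := Finset.card_pos.mpr hs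
    have h1q : 1 ≤ flog s.card ^ q := flog_rpow_ge_one hl hq.le
    have hposq : (0:ℝ) < flog s.card ^ q := lt_of_lt_of_le one_pos h1q
    have hsumnn : (0:ℝ) ≤ ∑ i ∈ s, |x i| := Finset.sum_nonneg fun i _ => abs_nonneg _
    rcases le_or_gt s.card L with hcase | hcase
    · -- small set: bound by card * ε
      have hsum : ∑ i ∈ s, |x i| ≤ s.card * ε := by
        calc ∑ i ∈ s, |x i| ≤ ∑ _i ∈ s, ε := Finset.sum_le_sum fun i _ => hxε i
        _ = s.card * ε := by rw [Finset.sum_const, nsmul_eq_mul]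
      calc (1 / flog s.card ^ q) * ∑ i ∈ s, |x i|
          ≤ 1 * ∑ i ∈ s, |x i| := by
            apply mul_le_mul_of_nonneg_right _ hsumnn
            rw [div_le_one hposq]; exact h1q
      _ = ∑ i ∈ s, |x i| := one_mul _
      _ ≤ s.card * ε := hsum
      _ ≤ L * ε := by
            apply mul_le_mul_of_nonneg_right _ hεpos.le
            exact_mod_cast hcase
      _ ≤ L * (δ / (2 * (L + 1))) :=
            mul_le_mul_of_nonneg_left hεlt.le (Nat.cast_nonneg _)
      _ ≤ ((L:ℝ)+1) * (δ / (2 * (L + 1))) := by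
            apply mul_le_mul_of_nonneg_right (by linarith) (by positivity)
      _ = δ / 2 := by
            have : ((L:ℝ)+1) ≠ 0 := by positivity
            field_simp
    · -- large set: use gnorm_p x ≤ 1
      have hmem : (1 / ((fun l : ℕ => flog l ^ p) s.card)) * ∑ i ∈ s, |x i| ∈
          {r : ℝ | ∃ s' : Finset ℕ, s'.Nonempty ∧
            r = (1 / ((fun l : ℕ => flog l ^ p) s'.card)) * ∑ i ∈ s', |x i|} :=
        ⟨s, hs, rfl⟩
      have hle : (1 / flog s.card ^ p) * ∑ i ∈ s, |x i| ≤ 1 := by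
        calc (1 / flog s.card ^ p) * ∑ i ∈ s, |x i|
            ≤ gnorm (fun l => flog l ^ p) x := le_csSup (gnorm_bddAbove p hp.le x) hmem
        _ ≤ 1 := hxp
      have h1p : 1 ≤ flog s.card ^ p := flog_rpow_ge_one hl hp.le
      have hposp : (0:ℝ) < flog s.card ^ p := lt_of_lt_of_le one_pos h1p
      have hsum : ∑ i ∈ s, |x i| ≤ flog s.card ^ p := by
        rw [div_mul_eq_mul_div, one_mul, div_le_one hposp] at hle
        exact hle
      have hflogpos : (0:ℝ) < flog s.card :=
        lt_of_lt_of_le one_pos (flog_nat_ge_one hl)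
      calc (1 / flog s.card ^ q) * ∑ i ∈ s, |x i|
          ≤ (1 / flog s.card ^ q) * flog s.card ^ p :=
            mul_le_mul_of_nonneg_left hsum (by positivity)
      _ = flog s.card ^ (p - q) := by
            rw [Real.rpow_sub hflogpos]
            ring
      _ ≤ δ / 2 := claimA s.card hcase
  -- conclude
  have hbdd : BddAbove S := ⟨δ/2, hub⟩
  have hne : S.Nonempty := ⟨0, h0S⟩
  have hsup_le : sSup S ≤ δ / 2 := csSup_le hne hub
  have hsup_ge : (0:ℝ) ≤ sSup S := le_csSup hbdd h0S
  rw [Real.dist_eq, sub_zero, abs_of_nonneg hsup_ge]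
  linarith
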